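/- arXiv:0911.2814 — 4 statements merged into one kernel-verified Lean document; each statement's English description precedes it below -/
import Mathlib

section
/- With notation as follows: θ(z,τ) = ∑_{n∈ℤ} exp(πiτn²+2πinz), a = Im(τ) > 0, z = u+vτ (u,v real), D = −(a/π)∂/∂z − 2iav. Then ∂/∂z̄ (D^k θ) = k · D^{k−1} θ for all k ≥ 1, where ∂/∂z̄ is the antiholomorphic Wirtinger derivative. -/
open Complex

/-- The Jacobi theta function `θ(z,τ) = ∑_{n ∈ ℤ} exp(πiτn² + 2πinz)`. -/
noncomputable def thetaFn (τ z : ℂ) : ℂ :=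
  ∑' n : ℤ, Complex.exp (Real.pi * Complex.I * τ * (n : ℂ) ^ 2 +
    2 * Real.pi * Complex.I * (n : ℂ) * z)

/-- The holomorphic Wirtinger derivative `∂f/∂z = (∂f/∂x - i ∂f/∂y)/2`. -/
noncomputable def wirtingerDz (f : ℂ → ℂ) (z : ℂ) : ℂ :=
  (fderiv ℝ f z 1 - Complex.I * fderiv ℝ f z Complex.I) / 2

/-- The antiholomorphic Wirtinger derivative `∂f/∂z̄ = (∂f/∂x + i ∂f/∂y)/2`. -/
noncomputable def wirtingerDzbar (f : ℂ → ℂ) (z : ℂ) : ℂ :=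
  (fderiv ℝ f z 1 + Complex.I * fderiv ℝ f z Complex.I) / 2

/-- The operator `D = -(a/π)·∂/∂z - 2iav`, where `a = Im τ` and `v = Im z / Im τ`. -/
noncomputable def Dop (τ : ℂ) (f : ℂ → ℂ) : ℂ → ℂ := fun z =>
  -((τ.im / Real.pi : ℝ) : ℂ) * wirtingerDz f z -
    2 * Complex.I * (τ.im : ℂ) * ((z.im / τ.im : ℝ) : ℂ) * f z

namespace Stmt6

open Finset

noncomputable section

/-- `z ↦ (Im z : ℂ)` as a continuous `ℝ`-linear map. -/
def imLC : ℂ →L[ℝ] ℂ := Complex.ofRealCLM.comp Complex.imCLM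

/-- identity as an `ℝ`-CLM on `ℂ`. -/
def idRC : ℂ →L[ℝ] ℂ := ContinuousLinearMap.id ℝ ℂ

@[simp] lemma imLC_apply (w : ℂ) : imLC w = (w.im : ℂ) := rfl
@[simp] lemma idRC_apply (w : ℂ) : idRC w = w := rfl

def imc (z : ℂ) : ℂ := (z.im : ℂ)

/-- Evaluation of a coefficient sequence. -/
def Ev (m : ℕ) (g : ℕ → ℂ → ℂ) : ℂ → ℂ := fun z => ∑ j ∈ range m, g j z * (imc z) ^ j

/-- Action of `∂/∂z̄` on coefficient sequences. -/
def Zc (g : ℕ → ℂ → ℂ) : ℕ → ℂ → ℂ := fun j z =>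
  (Complex.I / 2) * ((j : ℂ) + 1) * g (j + 1) z

/-- Action of `D` on coefficient sequences. -/
def Dc (a : ℝ) (g : ℕ → ℂ → ℂ) : ℕ → ℂ → ℂ := fun j z =>
  -((a : ℂ) / (Real.pi : ℂ)) *
      (deriv (g j) z - (Complex.I / 2) * ((j : ℂ) + 1) * g (j + 1) z)
    - 2 * Complex.I * (if j = 0 then 0 else g (j - 1) z)

structure Good (m : ℕ) (g : ℕ → ℂ → ℂ) : Prop where
  diff : ∀ j, Differentiable ℂ (g j)
  tail : ∀ j, m ≤ j → g j = 0

lemma entire_deriv {f : ℂ → ℂ} (hf : Differentiable ℂ f) : Differentiable ℂ (deriv f) := by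
  have h : AnalyticOnNhd ℂ f Set.univ :=
    hf.differentiableOn.analyticOnNhd isOpen_univ
  have h2 := h.deriv
  intro z
  exact (h2 z (Set.mem_univ z)).differentiableAt

lemma shift_sum (m : ℕ) (c : ℕ → ℂ) (h0 : c 0 = 0) (hm : c m = 0) :
    ∑ j ∈ range m, c j = ∑ j ∈ range m, c (j + 1) := by
  cases m with
  | zero => simp
  | succ n =>
      rw [Finset.sum_range_succ' c n, Finset.sum_range_succ (fun j => c (j + 1)) n, h0, hm]


lemma deriv_fun_zero : deriv (0 : ℂ → ℂ) = 0 := by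
  funext z
  rw [show (0 : ℂ → ℂ) = fun _ => (0 : ℂ) from rfl]
  simp

lemma hasFDerivAt_imc_pow (j : ℕ) (z : ℂ) :
    HasFDerivAt (fun z => (imc z) ^ j) (((j : ℂ) * (imc z) ^ (j - 1)) • imLC) z := by
  induction j with
  | zero =>
      have h0 : HasFDerivAt (fun _ : ℂ => (1 : ℂ)) (0 : ℂ →L[ℝ] ℂ) z := hasFDerivAt_const 1 z
      have he : (fun z : ℂ => imc z ^ 0) = fun _ => (1 : ℂ) := funext fun z => pow_zero _
      have hc : ((((0 : ℕ) : ℂ)) * imc z ^ (0 - 1)) • imLC = (0 : ℂ →L[ℝ] ℂ) := by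
        rw [Nat.cast_zero, zero_mul]
        exact zero_smul ℂ imLC
      rw [he, hc]
      exact h0
  | succ n ih =>
      have h1 : HasFDerivAt imc imLC z := imLC.hasFDerivAt
      have h2 := ih.mul h1
      have key : imc z ^ n • imLC + imc z • ((n : ℂ) * imc z ^ (n - 1)) • imLC
          = (((n : ℂ) + 1) * imc z ^ n) • imLC := by
        cases n with
        | zero =>
            push_cast
            module
        | succ i =>
            push_cast [Nat.add_sub_cancel]
            module
      have hgoal : HasFDerivAt (fun z => imc z ^ n * imc z)
          ((((n : ℂ) + 1) * imc z ^ n) • imLC) z := key ▸ h2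
      rw [show (fun z => imc z ^ (n + 1)) = fun z => imc z ^ n * imc z from
        funext fun z => pow_succ _ _]
      convert hgoal using 2
      push_cast [Nat.add_sub_cancel]
      ring

lemma hasFDerivAt_entire {g : ℂ → ℂ} (hg : Differentiable ℂ g) (z : ℂ) :
    HasFDerivAt g ((deriv g z) • idRC) z := by
  have h := ((hg z).hasDerivAt).hasFDerivAt
  have h2 := h.restrictScalars ℝ
  refine h2.congr_fderiv ?_; symm
  ext w
  simp [idRC, mul_comm]

lemma hasFDerivAt_Ev (m : ℕ) (g : ℕ → ℂ → ℂ) (hg : ∀ j, Differentiable ℂ (g j)) (z : ℂ) :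
    HasFDerivAt (Ev m g)
      (∑ j ∈ range m,
        ((g j z) • (((j : ℂ) * imc z ^ (j - 1)) • imLC)
          + (imc z ^ j) • ((deriv (g j) z) • idRC))) z := by
  exact HasFDerivAt.fun_sum fun j _ =>
    (hasFDerivAt_entire (hg j) z).mul (hasFDerivAt_imc_pow j z)

lemma fderiv_Ev_one (m : ℕ) (g : ℕ → ℂ → ℂ) (hg : ∀ j, Differentiable ℂ (g j)) (z : ℂ) :
    fderiv ℝ (Ev m g) z 1 = ∑ j ∈ range m, imc z ^ j * deriv (g j) z := by
  rw [(hasFDerivAt_Ev m g hg z).fderiv]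
  simp [smul_eq_mul]

lemma fderiv_Ev_I (m : ℕ) (g : ℕ → ℂ → ℂ) (hg : ∀ j, Differentiable ℂ (g j)) (z : ℂ) :
    fderiv ℝ (Ev m g) z Complex.I
      = ∑ j ∈ range m,
          (g j z * ((j : ℂ) * imc z ^ (j - 1)) + imc z ^ j * (deriv (g j) z * Complex.I)) := by
  rw [(hasFDerivAt_Ev m g hg z).fderiv]
  simp [smul_eq_mul]

lemma wirtDzbar_Ev (m : ℕ) (g : ℕ → ℂ → ℂ) (hg : Good m g) (z : ℂ) :
    wirtingerDzbar (Ev m g) z = Ev m (Zc g) z := by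
  rw [wirtingerDzbar, fderiv_Ev_one m g hg.diff z, fderiv_Ev_I m g hg.diff z,
    Finset.mul_sum, ← Finset.sum_add_distrib, Finset.sum_div]
  have hterm : ∀ j ∈ range m,
      (imc z ^ j * deriv (g j) z +
        Complex.I * (g j z * ((j : ℂ) * imc z ^ (j - 1)) + imc z ^ j * (deriv (g j) z * Complex.I))) / 2
      = (Complex.I / 2) * (j : ℂ) * g j z * imc z ^ (j - 1) := by
    intro j _
    have hI : Complex.I * Complex.I = -1 := Complex.I_mul_I
    linear_combination (imc z ^ j * deriv (g j) z / 2) * hI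
  rw [Finset.sum_congr rfl hterm]
  have h0 : (Complex.I / 2) * ((0 : ℕ) : ℂ) * g 0 z * imc z ^ (0 - 1) = 0 := by simp
  have hm : (Complex.I / 2) * ((m : ℕ) : ℂ) * g m z * imc z ^ (m - 1) = 0 := by
    rw [hg.tail m le_rfl]; simp
  have := shift_sum m (fun j => (Complex.I / 2) * (j : ℂ) * g j z * imc z ^ (j - 1)) h0 hm
  rw [this]
  apply Finset.sum_congr rfl
  intro j _
  simp only [Ev, Zc, Nat.add_sub_cancel]
  push_cast
  ring

lemma wirtDz_Ev (m : ℕ) (g : ℕ → ℂ → ℂ) (hg : ∀ j, Differentiable ℂ (g j)) (z : ℂ) :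
    wirtingerDz (Ev m g) z
      = ∑ j ∈ range m,
          (deriv (g j) z * imc z ^ j - (Complex.I / 2) * (j : ℂ) * g j z * imc z ^ (j - 1)) := by
  rw [wirtingerDz, fderiv_Ev_one m g hg z, fderiv_Ev_I m g hg z,
    Finset.mul_sum, ← Finset.sum_sub_distrib, Finset.sum_div]
  apply Finset.sum_congr rfl
  intro j _
  have hI : Complex.I * Complex.I = -1 := Complex.I_mul_I
  linear_combination (-(imc z ^ j * deriv (g j) z) / 2) * hI

lemma Dop_Ev (τ : ℂ) (hτ : 0 < τ.im) (m : ℕ) (g : ℕ → ℂ → ℂ) (hg : Good m g) :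
    Dop τ (Ev m g) = Ev (m + 1) (Dc τ.im g) := by
  have ha : (τ.im : ℂ) ≠ 0 := by
    exact_mod_cast ne_of_gt hτ
  funext z
  have hsplit : ∀ j ∈ range (m + 1),
      Dc τ.im g j z * imc z ^ j
        = (-((τ.im : ℂ) / (Real.pi : ℂ)) * deriv (g j) z * imc z ^ j)
          + (((τ.im : ℂ) / (Real.pi : ℂ)) * (Complex.I / 2) * ((j : ℂ) + 1) * g (j + 1) z * imc z ^ j)
          + (-(2 * Complex.I) * (if j = 0 then 0 else g (j - 1) z) * imc z ^ j) := by
    intro j _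
    simp only [Dc]
    ring
  have hRHS : Ev (m + 1) (Dc τ.im g) z
      = (∑ j ∈ range (m + 1), -((τ.im : ℂ) / (Real.pi : ℂ)) * deriv (g j) z * imc z ^ j)
        + (∑ j ∈ range (m + 1),
            ((τ.im : ℂ) / (Real.pi : ℂ)) * (Complex.I / 2) * ((j : ℂ) + 1) * g (j + 1) z * imc z ^ j)
        + (∑ j ∈ range (m + 1),
            -(2 * Complex.I) * (if j = 0 then 0 else g (j - 1) z) * imc z ^ j) := by
    rw [Ev, Finset.sum_congr rfl hsplit, Finset.sum_add_distrib, Finset.sum_add_distrib]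
  -- first sum: top term vanishes
  have hA : (∑ j ∈ range (m + 1), -((τ.im : ℂ) / (Real.pi : ℂ)) * deriv (g j) z * imc z ^ j)
      = ∑ j ∈ range m, -((τ.im : ℂ) / (Real.pi : ℂ)) * deriv (g j) z * imc z ^ j := by
    rw [Finset.sum_range_succ, hg.tail m le_rfl]
    simp [deriv_fun_zero]
  -- second sum: shift
  have hB : (∑ j ∈ range (m + 1),
        ((τ.im : ℂ) / (Real.pi : ℂ)) * (Complex.I / 2) * ((j : ℂ) + 1) * g (j + 1) z * imc z ^ j)
      = ∑ j ∈ range m, ((τ.im : ℂ) / (Real.pi : ℂ)) * (Complex.I / 2) * (j : ℂ) * g j z * imc z ^ (j - 1) := by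
    have h0 : ((τ.im : ℂ) / (Real.pi : ℂ)) * (Complex.I / 2) * ((0 : ℕ) : ℂ) * g 0 z * imc z ^ (0 - 1) = 0 := by
      simp
    have hm1 : ((τ.im : ℂ) / (Real.pi : ℂ)) * (Complex.I / 2) * ((m + 1 : ℕ) : ℂ) * g (m + 1) z * imc z ^ (m + 1 - 1) = 0 := by
      rw [hg.tail (m + 1) (by omega)]; simp
    have hs := shift_sum (m + 1)
      (fun j => ((τ.im : ℂ) / (Real.pi : ℂ)) * (Complex.I / 2) * (j : ℂ) * g j z * imc z ^ (j - 1)) h0 hm1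
    have htop : ((τ.im : ℂ) / (Real.pi : ℂ)) * (Complex.I / 2) * ((m : ℕ) : ℂ) * g m z * imc z ^ (m - 1) = 0 := by
      rw [hg.tail m le_rfl]; simp
    calc (∑ j ∈ range (m + 1),
          ((τ.im : ℂ) / (Real.pi : ℂ)) * (Complex.I / 2) * ((j : ℂ) + 1) * g (j + 1) z * imc z ^ j)
        = ∑ j ∈ range (m + 1),
            ((τ.im : ℂ) / (Real.pi : ℂ)) * (Complex.I / 2) * (((j + 1 : ℕ)) : ℂ) * g (j + 1) z * imc z ^ ((j + 1) - 1) := by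
          apply Finset.sum_congr rfl; intro j _; push_cast [Nat.add_sub_cancel]; ring
      _ = ∑ j ∈ range (m + 1),
            ((τ.im : ℂ) / (Real.pi : ℂ)) * (Complex.I / 2) * ((j : ℕ) : ℂ) * g j z * imc z ^ (j - 1) := hs.symm
      _ = ∑ j ∈ range m,
            ((τ.im : ℂ) / (Real.pi : ℂ)) * (Complex.I / 2) * ((j : ℕ) : ℂ) * g j z * imc z ^ (j - 1) := by
          rw [Finset.sum_range_succ, htop, add_zero]
  -- third sum: shift at 0
  have hC : (∑ j ∈ range (m + 1), -(2 * Complex.I) * (if j = 0 then 0 else g (j - 1) z) * imc z ^ j)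
      = ∑ j ∈ range m, -(2 * Complex.I) * g j z * imc z ^ (j + 1) := by
    rw [Finset.sum_range_succ'
      (fun j => -(2 * Complex.I) * (if j = 0 then 0 else g (j - 1) z) * imc z ^ j) m]
    simp
  have hπ : ((Real.pi : ℝ) : ℂ) ≠ 0 := by
    exact_mod_cast Real.pi_ne_zero
  rw [hRHS, hA, hB, hC, Dop, wirtDz_Ev m g hg.diff z]
  have hv : ((z.im / τ.im : ℝ) : ℂ) = imc z / (τ.im : ℂ) := by
    push_cast [imc]; ring
  rw [hv]
  simp only [Ev]
  rw [Finset.mul_sum, Finset.mul_sum, ← Finset.sum_sub_distrib,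
    ← Finset.sum_add_distrib, ← Finset.sum_add_distrib]
  apply Finset.sum_congr rfl
  intro j _
  push_cast
  field_simp
  ring

lemma Good_Dc (a : ℝ) (m : ℕ) (g : ℕ → ℂ → ℂ) (hg : Good m g) : Good (m + 1) (Dc a g) := by
  constructor
  · intro j
    have h1 : Differentiable ℂ (fun z => -((a : ℂ) / (Real.pi : ℂ)) *
        (deriv (g j) z - (Complex.I / 2) * ((j : ℂ) + 1) * g (j + 1) z)) :=
      (differentiable_const _).mul ((entire_deriv (hg.diff j)).sub
        ((differentiable_const _).mul (hg.diff (j + 1))))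
    have h2 : Differentiable ℂ (fun z =>
        2 * Complex.I * (if j = 0 then 0 else g (j - 1) z)) := by
      rcases Nat.eq_zero_or_pos j with h | h
      · subst h; simp
      · have : j ≠ 0 := by omega
        simp only [this, if_false]
        exact (differentiable_const _).mul (hg.diff (j - 1))
    exact h1.sub h2
  · intro j hj
    have h1 : g j = 0 := hg.tail j (by omega)
    have h2 : g (j + 1) = 0 := hg.tail (j + 1) (by omega)
    have h3 : g (j - 1) = 0 := hg.tail (j - 1) (by omega)
    have hj0 : j ≠ 0 := by omega
    funext z
    simp [Dc, h1, h2, h3, hj0, deriv_fun_zero]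

lemma Zc_Dc (a : ℝ) (g : ℕ → ℂ → ℂ) (hg : ∀ j, Differentiable ℂ (g j)) (j : ℕ) (z : ℂ) :
    Zc (Dc a g) j z = Dc a (Zc g) j z + g j z := by
  have hI : Complex.I * Complex.I = -1 := Complex.I_mul_I
  have hder : ∀ i : ℕ, deriv (Zc g i) z
      = (Complex.I / 2) * ((i : ℂ) + 1) * deriv (g (i + 1)) z := by
    intro i
    have hrw : Zc g i = fun z => (Complex.I / 2) * ((i : ℂ) + 1) * g (i + 1) z := rfl
    rw [hrw, deriv_const_mul _ ((hg (i + 1)) z)]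
  cases j with
  | zero =>
      simp only [Zc, Dc, hder, if_true, Nat.zero_eq]
      norm_num
      linear_combination (-(g 0 z)) * hI
  | succ n =>
      have hn1 : (n + 1 : ℕ) ≠ 0 := by omega
      have hn2 : (n + 2 : ℕ) ≠ 0 := by omega
      simp only [Zc, Dc, hder, hn1, hn2, if_false, Nat.add_sub_cancel]
      push_cast
      linear_combination (-(g (n + 1) z)) * hI

lemma Dc_smul (a : ℝ) (c : ℂ) (h : ℕ → ℂ → ℂ) (hd : ∀ j, Differentiable ℂ (h j))
    (j : ℕ) (z : ℂ) :
    Dc a (fun j z => c * h j z) j z = c * Dc a h j z := by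
  simp only [Dc]
  rw [deriv_const_mul _ ((hd j) z)]
  split_ifs <;> ring

lemma Dc_zero (a : ℝ) (j : ℕ) (z : ℂ) : Dc a (fun _ _ => (0 : ℂ)) j z = 0 := by
  simp [Dc]

/-- Coefficient sequences of `D^k θ`. -/
def Gc (τ : ℂ) : ℕ → ℕ → ℂ → ℂ
  | 0 => fun j => if j = 0 then thetaFn τ else 0
  | (k + 1) => Dc τ.im (Gc τ k)

lemma theta_eq (τ : ℂ) : thetaFn τ = fun z => jacobiTheta₂ z τ := by
  funext z
  unfold thetaFn jacobiTheta₂ jacobiTheta₂_term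
  apply tsum_congr
  intro n
  congr 1
  ring

lemma theta_diff {τ : ℂ} (hτ : 0 < τ.im) : Differentiable ℂ (thetaFn τ) := by
  rw [theta_eq]
  exact fun z => differentiableAt_jacobiTheta₂_fst z hτ

lemma Good_Gc (τ : ℂ) (hτ : 0 < τ.im) (k : ℕ) : Good (k + 1) (Gc τ k) := by
  induction k with
  | zero =>
      constructor
      · intro j
        simp only [Gc]
        split_ifs
        · exact theta_diff hτ
        · exact differentiable_const 0
      · intro j hj
        have : j ≠ 0 := by omega
        simp [Gc, this]
  | succ n ih => exact Good_Dc τ.im (n + 1) (Gc τ n) ih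

lemma repr_iter (τ : ℂ) (hτ : 0 < τ.im) (k : ℕ) :
    (Dop τ)^[k] (thetaFn τ) = Ev (k + 1) (Gc τ k) := by
  induction k with
  | zero =>
      funext z
      simp [Ev, Gc, imc]
  | succ n ih =>
      rw [Function.iterate_succ_apply', ih,
        Dop_Ev τ hτ (n + 1) (Gc τ n) (Good_Gc τ hτ n)]
      rfl

lemma Zc_Gc_zero (τ : ℂ) (j : ℕ) (z : ℂ) : Zc (Gc τ 0) j z = 0 := by
  simp [Zc, Gc]

lemma Zc_Gc (τ : ℂ) (hτ : 0 < τ.im) (k : ℕ) (j : ℕ) (z : ℂ) :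
    Zc (Gc τ (k + 1)) j z = ((k : ℂ) + 1) * Gc τ k j z := by
  induction k generalizing j z with
  | zero =>
      have h0 : Zc (Gc τ 0) = fun _ _ => (0 : ℂ) := by
        funext j z; exact Zc_Gc_zero τ j z
      have := Zc_Dc τ.im (Gc τ 0) (Good_Gc τ hτ 0).diff j z
      rw [show Gc τ 1 = Dc τ.im (Gc τ 0) from rfl, this, h0, Dc_zero]
      ring
  | succ n ih =>
      have hfun : Zc (Gc τ (n + 1)) = fun j z => ((n : ℂ) + 1) * Gc τ n j z := by
        funext j z; exact ih j z
      have hcomm := Zc_Dc τ.im (Gc τ (n + 1)) (Good_Gc τ hτ (n + 1)).diff j z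
      rw [show Gc τ (n + 2) = Dc τ.im (Gc τ (n + 1)) from rfl, hcomm, hfun,
        Dc_smul τ.im ((n : ℂ) + 1) (Gc τ n) (Good_Gc τ hτ n).diff j z]
      have : Dc τ.im (Gc τ n) j z = Gc τ (n + 1) j z := rfl
      rw [this]
      push_cast
      ring

end

end Stmt6

open Stmt6 Finset in
/-- `∂/∂z̄ (D^k θ) = k · D^{k-1} θ` for all `k ≥ 1`. -/
theorem stmt_6 (τ : ℂ) (hτ : 0 < τ.im) (k : ℕ) (hk : 1 ≤ k) (z : ℂ) :
    wirtingerDzbar ((Dop τ)^[k] (thetaFn τ)) z =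
      (k : ℂ) * (Dop τ)^[k - 1] (thetaFn τ) z := by
  obtain ⟨n, rfl⟩ : ∃ n, k = n + 1 := ⟨k - 1, by omega⟩
  rw [repr_iter τ hτ (n + 1), Nat.add_sub_cancel, repr_iter τ hτ n,
    wirtDzbar_Ev (n + 2) (Gc τ (n + 1)) (Good_Gc τ hτ (n + 1)) z]
  have hterm : ∀ j ∈ range (n + 2),
      Zc (Gc τ (n + 1)) j z * imc z ^ j = ((n : ℂ) + 1) * (Gc τ n j z * imc z ^ j) := by
    intro j _
    rw [Zc_Gc τ hτ n j z]; ring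
  rw [Ev, Finset.sum_congr rfl hterm, ← Finset.mul_sum]
  have htop : Gc τ n (n + 1) z * imc z ^ (n + 1) = 0 := by
    rw [(Good_Gc τ hτ n).tail (n + 1) le_rfl]; simp
  rw [Finset.sum_range_succ, htop, add_zero]
  push_cast
  rfl
end

section
/- Define g_{a,b} for nonnegative integers a < b of different parity by g_{a,b} = (b−a)!·W^a(e*_{b−a+1}), extended symmetrically g_{b,a} = g_{a,b}, where W is the weight-two operator W = −(π/a(L))(conj(ω₁)∂/∂ω₁ + conj(ω₂)∂/∂ω₂) and e*_n are the (modified) Eisenstein series. Given that W(f_{m,n}) = f_{m+2,n} + n·f_{m+1,n+1} and that e*_n = (2/(n−1)!) f_{n−1,1} + ∑_{m=2}^{n} f_{n−m,m}/(n−m)!, prove that g_{a,b} = ∑_{k≥0} k!·(C(a,k) + C(b,k))·f_{a+b−k,k+1}, where C(n,k) is the binomial coefficient (zero for k > n). -/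
lemma stmt8_helper {M : Type*} [AddCommGroup M] [Module ℚ M] (g : ℕ → ℕ → M) (a d : ℕ) :
    ∑ k ∈ Finset.range (2*(a+1) + d + 1),
        ((k.factorial * ((a+1).choose k + (a+1+d).choose k) : ℕ) : ℚ) • g (2*(a+1)+d-k) (k+1)
      = ∑ k ∈ Finset.range (2*a + d + 1),
          ((k.factorial * (a.choose k + (a+d).choose k) : ℕ) : ℚ) • g (2*a+d-k+2) (k+1)
        + ∑ k ∈ Finset.range (2*a + d + 1),
          (((k+1) * (k.factorial * (a.choose k + (a+d).choose k)) : ℕ) : ℚ) • g (2*a+d-k+1) (k+2) := by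
  have hC' : ∀ i : ℕ, (((i+1).factorial * ((a+1).choose (i+1) + (a+1+d).choose (i+1)) : ℕ) : ℚ)
      = (((i+1).factorial * (a.choose (i+1) + (a+d).choose (i+1)) : ℕ) : ℚ)
        + (((i+1) * (i.factorial * (a.choose i + (a+d).choose i)) : ℕ) : ℚ) := by
    intro i
    have h1 : (a+1).choose (i+1) = a.choose i + a.choose (i+1) := Nat.choose_succ_succ a i
    have h2 : (a+1+d).choose (i+1) = (a+d).choose i + (a+d).choose (i+1) := by
      have : a+1+d = (a+d)+1 := by ring
      rw [this]; exact Nat.choose_succ_succ (a+d) i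
    push_cast [h1, h2, Nat.factorial_succ]
    ring
  have hzero : ∀ k : ℕ, 2*a+d+1 ≤ k →
      ((k.factorial * (a.choose k + (a+d).choose k) : ℕ) : ℚ) = 0 := by
    intro k hk
    have h1 : a.choose k = 0 := Nat.choose_eq_zero_of_lt (by omega)
    have h2 : (a+d).choose k = 0 := Nat.choose_eq_zero_of_lt (by omega)
    simp [h1, h2]
  rw [show 2*(a+1)+d = 2*a+d+2 by ring]
  rw [Finset.sum_range_succ']
  simp only [hC', add_smul]
  rw [Finset.sum_add_distrib]
  have e2 : (∑ i ∈ Finset.range (2*a+d+2),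
        (((i+1) * (i.factorial * (a.choose i + (a+d).choose i)) : ℕ) : ℚ) • g (2*a+d+2-(i+1)) (i+1+1))
      = ∑ k ∈ Finset.range (2*a + d + 1),
          (((k+1) * (k.factorial * (a.choose k + (a+d).choose k)) : ℕ) : ℚ) • g (2*a+d-k+1) (k+2) := by
    rw [Finset.sum_range_succ]
    rw [show ((((2*a+d+1)+1) * ((2*a+d+1).factorial * (a.choose (2*a+d+1) + (a+d).choose (2*a+d+1))) : ℕ) : ℚ) = 0 by
      push_cast [hzero (2*a+d+1) le_rfl]; ring]
    simp only [zero_smul, add_zero]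
    apply Finset.sum_congr rfl
    intro i hi
    simp only [Finset.mem_range] at hi
    rw [show 2*a+d+2-(i+1) = 2*a+d-i+1 by omega]
  have e1 : (∑ i ∈ Finset.range (2*a+d+2),
          (((i+1).factorial * (a.choose (i+1) + (a+d).choose (i+1)) : ℕ) : ℚ) • g (2*a+d+2-(i+1)) (i+1+1))
        + ((Nat.factorial 0 * ((a+1).choose 0 + (a+1+d).choose 0) : ℕ) : ℚ) • g (2*a+d+2-0) (0+1)
      = ∑ k ∈ Finset.range (2*a + d + 1),
          ((k.factorial * (a.choose k + (a+d).choose k) : ℕ) : ℚ) • g (2*a+d-k+2) (k+1) := by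
    rw [Finset.sum_range_succ, Finset.sum_range_succ]
    rw [hzero (2*a+d+1+1) (by omega), hzero (2*a+d+1) (by omega)]
    simp only [zero_smul, add_zero]
    rw [Finset.sum_range_succ']
    congr 1
    · apply Finset.sum_congr rfl
      intro i hi
      simp only [Finset.mem_range] at hi
      rw [show 2*a+d+2-(i+1) = 2*a+d-(i+1)+2 by omega]
    · norm_num
  rw [e2, ← e1]
  abel


/-- Corollary 1.3: given the action `W(f_{m,n}) = f_{m+2,n} + n f_{m+1,n+1}`
and the expansion `e*_n = (2/(n-1)!) f_{n-1,1} + ∑_{m=2}^{n} f_{n-m,m}/(n-m)!`, the function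
`g_{a,b} = (b-a)!·W^a(e*_{b-a+1})` satisfies
`g_{a,b} = ∑_{k ≥ 0} k!(C(a,k)+C(b,k)) f_{a+b-k,k+1}`. -/
theorem stmt_8 (M : Type*) [AddCommGroup M] [Module ℚ M]
    (f : ℕ → ℕ → M) (W : Module.End ℚ M)
    (hW : ∀ m n : ℕ, W (f m n) = f (m + 2) n + (n : ℚ) • f (m + 1) (n + 1))
    (e : ℕ → M)
    (he : ∀ n : ℕ, 2 ≤ n →
      e n = (2 / (n - 1).factorial : ℚ) • f (n - 1) 1 +
        ∑ m ∈ Finset.Icc 2 n, (1 / (n - m).factorial : ℚ) • f (n - m) m)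
    (a b : ℕ) (hab : a < b) (hpar : Odd (a + b)) :
    (((b - a).factorial : ℚ)) • (W ^ a) (e (b - a + 1)) =
      ∑ k ∈ Finset.range (a + b + 1),
        ((k.factorial * (a.choose k + b.choose k) : ℕ) : ℚ) • f (a + b - k) (k + 1) := by
  set d := b - a with hd
  have hd1 : 1 ≤ d := by omega
  have key : ∀ a : ℕ, ((d.factorial : ℚ)) • (W ^ a) (e (d + 1)) =
      ∑ k ∈ Finset.range (2*a + d + 1),
        ((k.factorial * (a.choose k + (a+d).choose k) : ℕ) : ℚ) • f (2*a+d-k) (k+1) := by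
    intro a
    induction a with
    | zero =>
      rw [pow_zero, Module.End.one_apply, he (d+1) (by omega)]
      simp only [Nat.add_sub_cancel]
      rw [show (2*0+d+1) = d+1 by ring]
      rw [Finset.sum_range_succ']
      rw [smul_add, smul_smul, Finset.smul_sum]
      rw [← Finset.Ico_add_one_right_eq_Icc, Finset.sum_Ico_eq_sum_range, show d+1+1-2 = d by omega]
      rw [add_comm]
      congr 1
      · apply Finset.sum_congr rfl
        intro i hi
        simp only [Finset.mem_range] at hi
        rw [smul_smul]
        have hch : Nat.choose 0 (i+1) = 0 := Nat.choose_eq_zero_of_lt (by omega)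
        have hcc := Nat.choose_mul_factorial_mul_factorial (show i+1 ≤ d by omega)
        rw [show d+1-(2+i) = d-(i+1) by omega, show (2+i) = i+1+1 by omega,
          show 2*0+d-(i+1) = d-(i+1) by omega]
        congr 1
        have hne : ((d-(i+1)).factorial : ℚ) ≠ 0 := Nat.cast_ne_zero.2 (Nat.factorial_ne_zero _)
        field_simp
        push_cast [hch, ← hcc]
        ring
      · have hne : ((d.factorial : ℚ)) ≠ 0 := Nat.cast_ne_zero.2 (Nat.factorial_ne_zero _)
        rw [show 2*0+d-0 = d by omega]
        rw [show (d.factorial : ℚ) * (2 / d.factorial)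
            = ((Nat.factorial 0 * (Nat.choose 0 0 + d.choose 0) : ℕ) : ℚ) by
          field_simp
          norm_num]
        norm_num
    | succ a ih =>
      rw [pow_succ', Module.End.mul_apply, ← map_smul, ih, map_sum, stmt8_helper f a d]
      simp only [map_smul, hW, smul_add, smul_smul]
      rw [Finset.sum_add_distrib]
      congr 1
      apply Finset.sum_congr rfl
      intro k hk
      congr 1
      push_cast
      ring
  have h := key a
  rw [show a + d = b by omega, show 2*a + d = a + b by omega] at h
  exact h
end

section
/- Formally, let T be the linear operator on the free module with basis {f_{m,n} : m ≥ 0, n ≥ 1} defined by T(f_{m,n}) = f_{m+2,n} + n·f_{m+1,n+1}. For integers 0 ≤ a and b = a + (odd positive), set E_d = 2 f_{d−1,1}/(d−1)! + ∑_{m=2}^{d} f_{d−m,m}/(d−m)! with d = b−a+1. Then (b−a)!·T^a(E_{b−a+1}) = ∑_{k=0}^{a+b} k!·(C(a,k)+C(b,k))·f_{a+b−k,k+1}. -/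
/-- The free `ℚ`-module on symbols `f_{m,n}` indexed by pairs `(m,n) ∈ ℕ × ℕ`
(the relevant symbols having `m ≥ 0`, `n ≥ 1`); `fgen m n` is the basis element. -/
noncomputable def fgen (m n : ℕ) : (ℕ × ℕ) →₀ ℚ := Finsupp.single (m, n) 1

/-- The operator `T(f_{m,n}) = f_{m+2,n} + n·f_{m+1,n+1}`, extended linearly. -/
noncomputable def TopF (x : (ℕ × ℕ) →₀ ℚ) : (ℕ × ℕ) →₀ ℚ :=
  x.sum fun p c => c • (fgen (p.1 + 2) p.2 + (p.2 : ℚ) • fgen (p.1 + 1) (p.2 + 1))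

/-- `E_d = 2 f_{d-1,1}/(d-1)! + ∑_{m=2}^{d} f_{d-m,m}/(d-m)!`. -/
noncomputable def Efree (d : ℕ) : (ℕ × ℕ) →₀ ℚ :=
  (2 / (d - 1).factorial : ℚ) • fgen (d - 1) 1 +
    ∑ m ∈ Finset.Icc 2 d, (1 / (d - m).factorial : ℚ) • fgen (d - m) m

noncomputable def Rsum (a b : ℕ) : (ℕ × ℕ) →₀ ℚ :=
  ∑ k ∈ Finset.range (a + b + 1),
    ((k.factorial * (a.choose k + b.choose k) : ℕ) : ℚ) • fgen (a + b - k) (k + 1)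

lemma TopF_zero : TopF 0 = 0 := by
  simp [TopF]

lemma TopF_add (x y : (ℕ × ℕ) →₀ ℚ) : TopF (x + y) = TopF x + TopF y := by
  unfold TopF
  apply Finsupp.sum_add_index' (by intro p; simp) (by intro p c₁ c₂; rw [add_smul])

lemma TopF_smul_single (c : ℚ) (m n : ℕ) :
    TopF (c • fgen m n) = c • (fgen (m + 2) n + (n : ℚ) • fgen (m + 1) (n + 1)) := by
  unfold TopF fgen
  rw [Finsupp.smul_single, smul_eq_mul, mul_one]
  rw [Finsupp.sum_single_index (by simp)]

lemma TopF_smul (q : ℚ) (x : (ℕ × ℕ) →₀ ℚ) : TopF (q • x) = q • TopF x := by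
  unfold TopF
  rw [Finsupp.sum_smul_index' (by intro p; simp), Finsupp.smul_sum]
  apply Finsupp.sum_congr
  intro p _
  rw [smul_eq_mul, mul_smul]

lemma TopF_sum {ι : Type*} (s : Finset ι) (h : ι → (ℕ × ℕ) →₀ ℚ) :
    TopF (∑ i ∈ s, h i) = ∑ i ∈ s, TopF (h i) := by
  classical
  induction s using Finset.induction_on with
  | empty => simp [TopF_zero]
  | insert _ _ hx ih =>
    rw [Finset.sum_insert hx, TopF_add, ih, Finset.sum_insert hx]

/-- Extend the sum defining `Rsum` to a larger range; extra terms vanish. -/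
lemma Rsum_ext (a b m : ℕ) (h : a + b + 1 ≤ m) :
    Rsum a b = ∑ k ∈ Finset.range m,
      ((k.factorial * (a.choose k + b.choose k) : ℕ) : ℚ) • fgen (a + b - k) (k + 1) := by
  unfold Rsum
  apply Finset.sum_subset (Finset.range_subset_range.mpr h)
  intro k _ hk
  simp only [Finset.mem_range, not_lt] at hk
  have ha : a.choose k = 0 := Nat.choose_eq_zero_of_lt (by omega)
  have hb : b.choose k = 0 := Nat.choose_eq_zero_of_lt (by omega)
  simp [ha, hb]

/-- Pascal-type identity on coefficients. -/
lemma coeff_id (a b k : ℕ) :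
    k.factorial * ((a + 1).choose k + (b + 1).choose k) =
      k.factorial * (a.choose k + b.choose k) +
        k * ((k - 1).factorial * (a.choose (k - 1) + b.choose (k - 1))) := by
  cases k with
  | zero => simp
  | succ j =>
    have h1 : (a + 1).choose (j + 1) = a.choose j + a.choose (j + 1) :=
      Nat.choose_succ_succ a j
    have h2 : (b + 1).choose (j + 1) = b.choose j + b.choose (j + 1) :=
      Nat.choose_succ_succ b j
    have h3 : (j + 1).factorial = (j + 1) * j.factorial := Nat.factorial_succ j
    simp only [Nat.succ_sub_one, h1, h2, h3]
    ring

/-- The inductive step: `T` maps `Rsum a b` to `Rsum (a+1) (b+1)`. -/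
lemma TopF_Rsum (a b : ℕ) : TopF (Rsum a b) = Rsum (a + 1) (b + 1) := by
  have hn : a + 1 + (b + 1) = a + b + 2 := by omega
  unfold Rsum
  rw [TopF_sum]
  have hterm : ∀ k ∈ Finset.range (a + b + 1),
      TopF (((k.factorial * (a.choose k + b.choose k) : ℕ) : ℚ) • fgen (a + b - k) (k + 1)) =
        ((k.factorial * (a.choose k + b.choose k) : ℕ) : ℚ) • fgen (a + b + 2 - k) (k + 1) +
          ((k.factorial * (a.choose k + b.choose k) * (k + 1) : ℕ) : ℚ) •
            fgen (a + b + 1 - k) (k + 2) := by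
    intro k hk
    simp only [Finset.mem_range] at hk
    rw [TopF_smul_single]
    have e1 : a + b - k + 2 = a + b + 2 - k := by omega
    have e2 : a + b - k + 1 = a + b + 1 - k := by omega
    rw [e1, e2, smul_add, smul_smul]
    congr 1
    push_cast
    ring_nf
  rw [Finset.sum_congr rfl hterm, Finset.sum_add_distrib]
  -- Extend both sums to range (a+b+3) with vanishing extra terms.
  have hA : ∑ k ∈ Finset.range (a + b + 1),
      ((k.factorial * (a.choose k + b.choose k) : ℕ) : ℚ) • fgen (a + b + 2 - k) (k + 1) =
      ∑ k ∈ Finset.range (a + b + 3),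
      ((k.factorial * (a.choose k + b.choose k) : ℕ) : ℚ) • fgen (a + b + 2 - k) (k + 1) := by
    apply Finset.sum_subset (Finset.range_subset_range.mpr (by omega))
    intro k _ hk
    simp only [Finset.mem_range, not_lt] at hk
    have ha : a.choose k = 0 := Nat.choose_eq_zero_of_lt (by omega)
    have hb : b.choose k = 0 := Nat.choose_eq_zero_of_lt (by omega)
    simp [ha, hb]
  have hB : ∑ k ∈ Finset.range (a + b + 1),
      ((k.factorial * (a.choose k + b.choose k) * (k + 1) : ℕ) : ℚ) • fgen (a + b + 1 - k) (k + 2) =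
      ∑ k ∈ Finset.range (a + b + 2),
      ((k.factorial * (a.choose k + b.choose k) * (k + 1) : ℕ) : ℚ) • fgen (a + b + 1 - k) (k + 2) := by
    apply Finset.sum_subset (Finset.range_subset_range.mpr (by omega))
    intro k _ hk
    simp only [Finset.mem_range, not_lt] at hk
    have ha : a.choose k = 0 := Nat.choose_eq_zero_of_lt (by omega)
    have hb : b.choose k = 0 := Nat.choose_eq_zero_of_lt (by omega)
    simp [ha, hb]
  rw [hA, hB]
  -- Now rewrite the target as a sum over range (a+b+3) and split per-term.
  rw [hn]
  have : ∀ k ∈ Finset.range (a + b + 3),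
      ((k.factorial * ((a + 1).choose k + (b + 1).choose k) : ℕ) : ℚ) • fgen (a + b + 2 - k) (k + 1)
      = ((k.factorial * (a.choose k + b.choose k) : ℕ) : ℚ) • fgen (a + b + 2 - k) (k + 1) +
        ((k * ((k - 1).factorial * (a.choose (k - 1) + b.choose (k - 1))) : ℕ) : ℚ) •
          fgen (a + b + 2 - k) (k + 1) := by
    intro k _
    rw [← add_smul, ← Nat.cast_add, coeff_id]
  rw [Finset.sum_congr rfl this, Finset.sum_add_distrib]
  congr 1
  -- remaining: shifted sum equality
  rw [Finset.sum_range_succ' (fun k =>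
    ((k * ((k - 1).factorial * (a.choose (k - 1) + b.choose (k - 1))) : ℕ) : ℚ) •
      fgen (a + b + 2 - k) (k + 1)) (a + b + 2)]
  simp only [Nat.zero_mul, Nat.cast_zero, zero_smul, add_zero, Nat.succ_sub_one]
  apply Finset.sum_congr rfl
  intro k _
  have e : a + b + 2 - (k + 1) = a + b + 1 - k := by omega
  rw [e]
  congr 2
  ring

/-- Base case: `c! • E_{c+1} = Rsum 0 c`. -/
lemma base_case (c : ℕ) : ((c.factorial : ℚ)) • Efree (c + 1) = Rsum 0 c := by
  unfold Efree Rsum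
  have h1 : c + 1 - 1 = c := by omega
  rw [h1, smul_add, smul_smul, Finset.smul_sum]
  have hfact : (c.factorial : ℚ) ≠ 0 := Nat.cast_ne_zero.mpr (Nat.factorial_ne_zero c)
  have hc0 : (c.factorial : ℚ) * (2 / (c.factorial : ℚ)) = 2 := by
    field_simp
  rw [hc0]
  -- RHS: peel off k = 0
  rw [show (0 : ℕ) + c = c from by omega]
  rw [Finset.sum_range_succ' (fun k =>
    ((k.factorial * (Nat.choose 0 k + c.choose k) : ℕ) : ℚ) • fgen (c - k) (k + 1)) c]
  have hk0 : ((Nat.factorial 0 * (Nat.choose 0 0 + c.choose 0) : ℕ) : ℚ) • fgen (c - 0) (0 + 1)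
      = (2 : ℚ) • fgen c 1 := by
    norm_num
  rw [hk0, add_comm]
  congr 1
  -- LHS sum over Icc 2 (c+1), RHS sum over range c with k+1
  rw [show Finset.Icc 2 (c + 1) = Finset.Ico 2 (c + 2) from by rw [show c + 2 = c + 1 + 1 from rfl, Finset.Ico_add_one_right_eq_Icc]]
  rw [Finset.sum_Ico_eq_sum_range]
  rw [show c + 2 - 2 = c from by omega]
  apply Finset.sum_congr rfl
  intro i hi
  simp only [Finset.mem_range] at hi
  have e1 : c + 1 - (2 + i) = c - (i + 1) := by omega
  rw [e1]
  have hch : Nat.choose 0 (i + 1) = 0 := by simp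
  rw [hch]
  have e2 : 2 + i = i + 1 + 1 := by omega
  rw [e2, smul_smul]
  congr 1
  -- coefficient identity: c! * (1/(c-(i+1))!) = (i+1)! * C(c, i+1)
  have hle : i + 1 ≤ c := by omega
  have key := Nat.choose_mul_factorial_mul_factorial hle
  have hne : ((c - (i + 1)).factorial : ℚ) ≠ 0 := Nat.cast_ne_zero.mpr (Nat.factorial_ne_zero _)
  rw [zero_add]
  field_simp
  push_cast [← key]
  ring

lemma key_lemma (a c : ℕ) :
    ((c.factorial : ℚ)) • TopF^[a] (Efree (c + 1)) = Rsum a (a + c) := by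
  induction a with
  | zero => simpa using base_case c
  | succ n ih =>
    rw [Function.iterate_succ_apply']
    have hsm : TopF ((c.factorial : ℚ) • TopF^[n] (Efree (c + 1)))
        = (c.factorial : ℚ) • TopF (TopF^[n] (Efree (c + 1))) := TopF_smul _ _
    rw [← hsm, ih, TopF_Rsum]
    congr 1
    omega

/-- the combinatorial core of Corollary 1.3:
`(b-a)!·T^a(E_{b-a+1}) = ∑_{k=0}^{a+b} k!(C(a,k)+C(b,k))·f_{a+b-k,k+1}`
for `0 ≤ a < b` of different parity. -/
theorem stmt_9 (a b : ℕ) (hab : a < b) (hpar : Odd (a + b)) :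
    (((b - a).factorial : ℚ)) • TopF^[a] (Efree (b - a + 1)) =
      ∑ k ∈ Finset.range (a + b + 1),
        ((k.factorial * (a.choose k + b.choose k) : ℕ) : ℚ) • fgen (a + b - k) (k + 1) := by
  have h := key_lemma a (b - a)
  rw [show a + (b - a) = b from by omega] at h
  rw [h]
  rfl
end

section
/- Let (A,d) be a differential graded algebra, B ⊆ ker(d) a graded subspace, Π: A → B a projector, and Q: A → A a degree −1 operator with 1 − Π = dQ + Qd, ΠQ = QΠ = Q² = 0. Define λ₂(a₁,a₂) = a₁a₂ and recursively λₙ by Merkulov's formula (λₙ(a₁,…,aₙ) = ±Q(λ_{n−1}(a₁,…,a_{n−1}))·aₙ ± a₁·Q(λ_{n−1}(a₂,…,aₙ)) + ∑_{k+l=n, k,l≥2} ±Q(λ_k(a₁,…,a_k))·Q(λ_l(a_{k+1},…,aₙ))), and mₙ = Π∘λₙ for n ≥ 2. If n ≥ 3 and (b₁,…,bₙ) are elements of B with bᵢ = 1 (the unit of A) for some i, then mₙ(b₁,…,bₙ) = 0. -/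
/-- Lemma 2.1: in Merkulov's construction, any higher product
`mₙ = Π ∘ λₙ` (`n ≥ 3`) vanishes on a tuple of elements of `B` one of which is the
unit of `A`. Tuples are encoded as lists, `λ` is given by Merkulov's recursion with
arbitrary sign functions. -/
theorem stmt_10 (A : Type*) [Ring A] (B : Set A)
    (d P Q : A →+ A)
    (hBker : ∀ b ∈ B, d b = 0)
    (hPmem : ∀ x : A, P x ∈ B)
    (hPproj : ∀ b ∈ B, P b = b)
    (hhomotopy : ∀ x : A, d (Q x) + Q (d x) = x - P x)
    (hPQ : ∀ x : A, P (Q x) = 0)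
    (hQP : ∀ x : A, Q (P x) = 0)
    (hQQ : ∀ x : A, Q (Q x) = 0)
    (lam : List A → A)
    (hlam2 : ∀ x y : A, lam [x, y] = x * y)
    (sgn1 sgn2 : List A → ℤ) (sgn3 : List A → ℕ → ℤ)
    (hrec : ∀ l : List A, 3 ≤ l.length →
      lam l = sgn1 l • (Q (lam l.dropLast) * l.getLastD 0) +
        sgn2 l • (l.headD 0 * Q (lam l.tail)) +
        ∑ k ∈ Finset.Ico 2 (l.length - 1),
          sgn3 l k • (Q (lam (l.take k)) * Q (lam (l.drop k)))) :
    ∀ l : List A, 3 ≤ l.length → (∀ x ∈ l, x ∈ B) → (1 : A) ∈ l →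
      P (lam l) = 0 := by
  have hQB : ∀ b ∈ B, Q b = 0 := fun b hb => by rw [← hPproj b hb, hQP]
  have key : ∀ n : ℕ, ∀ l : List A, l.length ≤ n → 2 ≤ l.length →
      (∀ x ∈ l, x ∈ B) → (1 : A) ∈ l →
      Q (lam l) = 0 ∧ (3 ≤ l.length → P (lam l) = 0) := by
    intro n
    induction n with
    | zero => intro l h1 h2 _ _; omega
    | succ n ih =>
      intro l hlen h2 hB h1
      rcases eq_or_lt_of_le h2 with h2' | h3
      · -- length exactly 2
        obtain ⟨x, y, rfl⟩ := List.length_eq_two.mp h2'.symm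
        refine ⟨?_, by simp⟩
        rw [hlam2]
        simp only [List.mem_cons, List.not_mem_nil, or_false] at h1
        rcases h1 with h | h
        · rw [← h, one_mul]
          exact hQB y (hB y (by simp))
        · rw [← h, mul_one]
          exact hQB x (hB x (by simp))
      · have h3 : 3 ≤ l.length := h3
        have hne : l ≠ [] := by intro h; rw [h] at h3; simp at h3
        have hdB : ∀ x ∈ l.dropLast, x ∈ B := fun x hx => hB x (List.dropLast_subset l hx)
        have htB : ∀ x ∈ l.tail, x ∈ B := fun x hx => hB x (List.mem_of_mem_tail hx)
        have hdlen : l.dropLast.length = l.length - 1 := List.length_dropLast (xs := l)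
        have htlen : l.tail.length = l.length - 1 := List.length_tail (l := l)
        have main : ∀ F : A →+ A, (∀ x, F (Q x) = 0) → F (lam l) = 0 := by
          intro F hF
          rw [hrec l h3, map_add, map_add, map_zsmul, map_zsmul, map_sum]
          have ht1 : F (Q (lam l.dropLast) * l.getLastD 0) = 0 := by
            by_cases hu : (1 : A) ∈ l.dropLast
            · rw [(ih l.dropLast (by omega) (by omega) hdB hu).1, zero_mul, map_zero]
            · have hlast : l.getLastD 0 = 1 := by
                have := List.dropLast_append_getLast hne
                rw [← this] at h1
                rcases List.mem_append.mp h1 with h | h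
                · exact absurd h hu
                · simp at h
                  rw [← this, List.getLastD_concat, h]
              rw [hlast, mul_one, hF]
          have ht2 : F (l.headD 0 * Q (lam l.tail)) = 0 := by
            obtain ⟨a, t, rfl⟩ := List.exists_cons_of_ne_nil hne
            simp only [List.headD_cons, List.tail_cons] at *
            rcases List.mem_cons.mp h1 with h | h
            · rw [← h, one_mul, hF]
            · rw [(ih t (by omega) (by omega) (fun x hx => htB x hx) h).1, mul_zero, map_zero]
          have ht3 : ∀ k ∈ Finset.Ico 2 (l.length - 1),
              F (sgn3 l k • (Q (lam (l.take k)) * Q (lam (l.drop k)))) = 0 := by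
            intro k hk
            rw [Finset.mem_Ico] at hk
            have htk : (l.take k).length = k := by
              rw [List.length_take]; omega
            have hdk : (l.drop k).length = l.length - k := List.length_drop (i := k) (l := l)
            have hmem : (1 : A) ∈ l.take k ∨ (1 : A) ∈ l.drop k := by
              rw [← List.mem_append, List.take_append_drop]; exact h1
            rcases hmem with h | h
            · rw [(ih (l.take k) (by omega) (by omega)
                (fun x hx => hB x (List.take_subset k l hx)) h).1, zero_mul,
                smul_zero, map_zero]
            · rw [(ih (l.drop k) (by omega) (by omega)
                (fun x hx => hB x (List.drop_subset k l hx)) h).1, mul_zero,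
                smul_zero, map_zero]
          rw [ht1, ht2, Finset.sum_eq_zero ht3, smul_zero, smul_zero, add_zero, add_zero]
        exact ⟨main Q hQQ, fun _ => main P hPQ⟩
  intro l h3 hB h1
  exact (key l.length l le_rfl (by omega) hB h1).2 h3
end
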